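/- Let A be a unital algebra, π : A → B(X ⊕ X) a representation preserving the grading, F = [[0, F₋],[F₊, 0]] an even Banach Fredholm module over A with grading γ = diag(−Id, Id): that is, F² − Id is compact and [F, π(a)] is compact for all a ∈ A. Then for every idempotent e ∈ A, the operator π₊(e) F₊ π₊(e), viewed as an operator from π₊(e)(X₊) to π₋(e)(X₋), is Fredholm. -/

import Mathlib

noncomputable section

/-- A bounded operator between Banach spaces is Fredholm if its kernel and cokernel
are finite-dimensional. -/
def IsFredholm {X Y : Type*} [NormedAddCommGroup X] [NormedSpace ℂ X]
    [NormedAddCommGroup Y] [NormedSpace ℂ Y] (T : X →L[ℂ] Y) : Prop :=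
  FiniteDimensional ℂ (LinearMap.ker (T : X →ₗ[ℂ] Y)) ∧ FiniteDimensional ℂ (Y ⧸ LinearMap.range (T : X →ₗ[ℂ] Y))

section RieszTheory

open Metric Set Filter Topology

set_option maxHeartbeats 1000000

variable {Y : Type*} [NormedAddCommGroup Y] [NormedSpace ℂ Y]

lemma clm_image_closedBall_subset_compact (B : Y →L[ℂ] Y) (hB : IsCompactOperator ⇑B) (r : ℝ) :
    ∃ C : Set Y, IsCompact C ∧ ⇑B '' Metric.closedBall 0 r ⊆ C := by
  have hB' : IsCompactOperator ⇑(B : Y →ₗ[ℂ] Y) := by rwa [ContinuousLinearMap.coe_coe]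
  simpa using hB'.image_closedBall_subset_compact r

lemma riesz_ker (T : Y →L[ℂ] Y) (hK : IsCompactOperator ⇑(1 - T)) :
    FiniteDimensional ℂ (LinearMap.ker (T : Y →ₗ[ℂ] Y)) := by
  have hNclosed : IsClosed ((LinearMap.ker (T : Y →ₗ[ℂ] Y) : Submodule ℂ Y) : Set Y) :=
    ContinuousLinearMap.isClosed_ker T
  obtain ⟨C, hC, hCK⟩ := clm_image_closedBall_subset_compact (1 - T) hK 1
  set D : Set Y := (C ∩ (LinearMap.ker (T : Y →ₗ[ℂ] Y) : Submodule ℂ Y)) ∩ Metric.closedBall 0 1 with hDdef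
  have hD : IsCompact D := (hC.inter_right hNclosed).inter_right Metric.isClosed_closedBall
  have hball : Metric.closedBall (0 : LinearMap.ker (T : Y →ₗ[ℂ] Y)) 1 = Subtype.val ⁻¹' D := by
    ext x
    have hnorm : dist x 0 = ‖(x : Y)‖ := by
      rw [dist_zero_right]; rfl
    constructor
    · intro hx
      rw [Metric.mem_closedBall, hnorm] at hx
      have hx1 : (x : Y) ∈ Metric.closedBall (0 : Y) 1 := by
        rwa [Metric.mem_closedBall, dist_zero_right]
      have hTx : T (x : Y) = 0 := x.2
      have heq : (1 - T) (x : Y) = (x : Y) := by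
        rw [ContinuousLinearMap.sub_apply, ContinuousLinearMap.one_apply, hTx, sub_zero]
      have hmem : (x : Y) ∈ C := by
        have := hCK ⟨(x : Y), hx1, rfl⟩
        rwa [heq] at this
      exact ⟨⟨hmem, x.2⟩, hx1⟩
    · intro hx
      rw [Metric.mem_closedBall, hnorm]
      simpa [Metric.mem_closedBall, dist_zero_right] using hx.2
  have hcomp : IsCompact (Metric.closedBall (0 : LinearMap.ker (T : Y →ₗ[ℂ] Y)) 1) := by
    rw [hball]
    exact hNclosed.isClosedEmbedding_subtypeVal.isCompact_preimage hD
  exact FiniteDimensional.of_isCompact_closedBall₀ ℂ one_pos hcomp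

lemma riesz_range_closed [CompleteSpace Y] (T : Y →L[ℂ] Y) (hK : IsCompactOperator ⇑(1 - T)) :
    IsClosed ((LinearMap.range (T : Y →ₗ[ℂ] Y) : Submodule ℂ Y) : Set Y) := by
  haveI hNfd : FiniteDimensional ℂ (LinearMap.ker (T : Y →ₗ[ℂ] Y)) := riesz_ker T hK
  obtain ⟨f, hf⟩ := Submodule.ClosedComplemented.of_finiteDimensional (LinearMap.ker (T : Y →ₗ[ℂ] Y))
  set M : Submodule ℂ Y := LinearMap.ker (f : Y →ₗ[ℂ] LinearMap.ker (T : Y →ₗ[ℂ] Y)) with hMdef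
  have hMclosed : IsClosed (M : Set Y) := ContinuousLinearMap.isClosed_ker f
  haveI : CompleteSpace M := hMclosed.completeSpace_coe
  -- bounded below on M
  have key : ∃ c : ℝ, 0 < c ∧ ∀ x ∈ M, ‖x‖ ≤ c * ‖T x‖ := by
    by_contra hcontra
    push_neg at hcontra
    have hseq : ∀ n : ℕ, ∃ u : Y, u ∈ M ∧ ‖u‖ = 1 ∧ ‖T u‖ < 1 / (n + 1) := by
      intro n
      obtain ⟨x, hxM, hx⟩ := hcontra (n + 1) (by positivity)
      have hx0 : x ≠ 0 := by
        intro h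
        rw [h] at hx
        simp at hx
      have hxpos : (0:ℝ) < ‖x‖ := norm_pos_iff.2 hx0
      have h1 : ‖T x‖ < ‖x‖ / (n + 1) := by
        rw [lt_div_iff₀ (by positivity), mul_comm]
        exact hx
      refine ⟨‖x‖⁻¹ • x, M.smul_mem _ hxM, ?_, ?_⟩
      · rw [norm_smul, norm_inv, norm_norm, inv_mul_cancel₀ hxpos.ne']
      · rw [T.map_smul_of_tower, norm_smul, norm_inv, norm_norm]
        calc ‖x‖⁻¹ * ‖T x‖ < ‖x‖⁻¹ * (‖x‖ / (n + 1)) :=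
              mul_lt_mul_of_pos_left h1 (by positivity)
          _ = 1 / (n + 1) := by field_simp
    choose u huM hunorm huT using hseq
    obtain ⟨C, hC, hCK⟩ := clm_image_closedBall_subset_compact (1 - T) hK 1
    have huball : ∀ n, (1 - T) (u n) ∈ C := fun n => hCK ⟨u n, by simp [hunorm n], rfl⟩
    obtain ⟨y, hyC, φ, hφ, hconv⟩ := hC.tendsto_subseq huball
    have hTu : Tendsto (fun n => T (u (φ n))) atTop (𝓝 0) := by
      refine squeeze_zero_norm (fun n => ?_) tendsto_one_div_add_atTop_nhds_zero_nat
      refine (huT (φ n)).le.trans ?_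
      have hn : (n:ℝ) ≤ (φ n : ℝ) := Nat.cast_le.2 hφ.le_apply
      exact one_div_le_one_div_of_le (by positivity) (by linarith)
    have huconv : Tendsto (fun n => u (φ n)) atTop (𝓝 y) := by
      have h := hTu.add hconv
      rw [zero_add] at h
      refine h.congr fun n => ?_
      simp only [Function.comp_apply, ContinuousLinearMap.sub_apply,
        ContinuousLinearMap.one_apply]
      abel
    have hyM : y ∈ M := hMclosed.mem_of_tendsto huconv (Eventually.of_forall fun n => huM (φ n))
    have hynorm : ‖y‖ = 1 := by
      have h2 : Tendsto (fun n => ‖u (φ n)‖) atTop (𝓝 1) := by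
        simp only [hunorm]
        exact tendsto_const_nhds
      exact tendsto_nhds_unique ((continuous_norm.tendsto y).comp huconv) h2
    have hyker : T y = 0 := by
      have h1 : Tendsto (fun n => T (u (φ n))) atTop (𝓝 (T y)) :=
        (T.continuous.tendsto y).comp huconv
      exact tendsto_nhds_unique h1 hTu
    have hy0 : y = 0 := by
      have h1 : f y = ⟨y, hyker⟩ := hf ⟨y, hyker⟩
      have h2 : f y = 0 := hyM
      have h3 : (⟨y, hyker⟩ : LinearMap.ker (T : Y →ₗ[ℂ] Y)) = 0 := by rw [← h1, h2]
      exact congrArg Subtype.val h3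
    rw [hy0, norm_zero] at hynorm
    norm_num at hynorm
  obtain ⟨c, hc, hbound⟩ := key
  set TM : M →L[ℂ] Y := T.comp M.subtypeL with hTM
  have hrange : ((LinearMap.range (T : Y →ₗ[ℂ] Y) : Submodule ℂ Y) : Set Y) = Set.range TM := by
    ext z
    constructor
    · rintro ⟨x, rfl⟩
      have hfm : (x - (f x : Y)) ∈ M := by
        have h2 : f ((f x : Y)) = f x := hf (f x)
        have : f (x - (f x : Y)) = 0 := by rw [map_sub, h2, sub_self]
        exact this
      refine ⟨⟨x - (f x : Y), hfm⟩, ?_⟩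
      have hTfx : T ((f x : Y)) = 0 := (f x).2
      simp [hTM, ContinuousLinearMap.comp_apply, map_sub, hTfx]
    · rintro ⟨m, rfl⟩
      exact ⟨(m : Y), rfl⟩
  rw [hrange]
  have hanti : AntilipschitzWith (Real.toNNReal c) TM := by
    apply ContinuousLinearMap.antilipschitz_of_bound
    intro x
    calc ‖x‖ = ‖(x : Y)‖ := rfl
      _ ≤ c * ‖T (x : Y)‖ := hbound (x : Y) x.2
      _ = (Real.toNNReal c : ℝ) * ‖TM x‖ := by
          rw [Real.coe_toNNReal c hc.le]; rfl
  exact hanti.isClosed_range TM.uniformContinuous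

lemma riesz_coker [CompleteSpace Y] (T : Y →L[ℂ] Y) (hK : IsCompactOperator ⇑(1 - T)) :
    FiniteDimensional ℂ (Y ⧸ LinearMap.range (T : Y →ₗ[ℂ] Y)) := by
  haveI hRclosed : IsClosed ((LinearMap.range (T : Y →ₗ[ℂ] Y) : Submodule ℂ Y) : Set Y) :=
    riesz_range_closed T hK
  obtain ⟨C, hC, hCK⟩ := clm_image_closedBall_subset_compact (1 - T) hK 2
  set q : Y → Y ⧸ LinearMap.range (T : Y →ₗ[ℂ] Y) := fun y => Submodule.Quotient.mk y with hqdef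
  have hq : LipschitzWith 1 q := by
    refine LipschitzWith.of_dist_le_mul fun x y => ?_
    rw [dist_eq_norm, dist_eq_norm, NNReal.coe_one, one_mul]
    have : q x - q y = Submodule.Quotient.mk (x - y) := by
      simp [hqdef, Submodule.Quotient.mk_sub]
    rw [this]
    exact Submodule.Quotient.norm_mk_le _ _
  have hsub : Metric.closedBall (0 : Y ⧸ LinearMap.range (T : Y →ₗ[ℂ] Y)) 1 ⊆ q '' C := by
    intro z hz
    have hz' : ‖z‖ ≤ 1 := by simpa [dist_zero_right] using hz
    obtain ⟨y, hymk, hy⟩ := Submodule.Quotient.norm_mk_lt z one_pos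
    have hy2 : y ∈ Metric.closedBall (0:Y) 2 := by
      rw [Metric.mem_closedBall, dist_zero_right]
      linarith
    refine ⟨(1 - T) y, hCK ⟨y, hy2, rfl⟩, ?_⟩
    have : q ((1 - T) y) = q y := by
      rw [hqdef]
      rw [Submodule.Quotient.eq]
      have : (1 - T) y - y = -(T y) := by
        rw [ContinuousLinearMap.sub_apply, ContinuousLinearMap.one_apply]
        abel
      rw [this]
      exact Submodule.neg_mem _ (LinearMap.mem_range_self _ y)
    exact this.trans hymk
  have hcomp : IsCompact (Metric.closedBall (0 : Y ⧸ LinearMap.range (T : Y →ₗ[ℂ] Y)) 1) :=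
    IsCompact.of_isClosed_subset (hC.image hq.continuous) Metric.isClosed_closedBall hsub
  exact FiniteDimensional.of_isCompact_closedBall₀ ℂ one_pos hcomp

end RieszTheory

set_option maxHeartbeats 1000000

lemma atkinson {E F : Type*} [NormedAddCommGroup E] [NormedSpace ℂ E] [CompleteSpace E]
    [NormedAddCommGroup F] [NormedSpace ℂ F] [CompleteSpace F]
    (T : E →L[ℂ] F) (S : F →L[ℂ] E)
    (hST : IsCompactOperator ⇑(1 - S.comp T))
    (hTS : IsCompactOperator ⇑(1 - T.comp S)) : IsFredholm T := by
  constructor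
  · haveI := riesz_ker (S.comp T) hST
    refine Submodule.finiteDimensional_of_le (S₂ := LinearMap.ker (S.comp T : E →ₗ[ℂ] E)) ?_
    intro x hx
    have hx' : T x = 0 := hx
    show S (T x) = 0
    rw [hx', map_zero]
  · haveI := riesz_coker (T.comp S) hTS
    have hle : LinearMap.range (T.comp S : F →ₗ[ℂ] F) ≤
        (LinearMap.range (T : E →ₗ[ℂ] F)).comap (LinearMap.id : F →ₗ[ℂ] F) := by
      rintro _ ⟨x, rfl⟩
      exact ⟨S x, rfl⟩
    let g := Submodule.mapQ (LinearMap.range (T.comp S : F →ₗ[ℂ] F)) (LinearMap.range (T : E →ₗ[ℂ] F))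
      (LinearMap.id : F →ₗ[ℂ] F) hle
    have hsurj : Function.Surjective g := by
      intro z
      obtain ⟨y, rfl⟩ := Submodule.mkQ_surjective _ z
      exact ⟨Submodule.Quotient.mk y, rfl⟩
    exact Module.Finite.of_surjective g hsurj

/-- Even coupling: for an even Banach Fredholm module over `A`, with off-diagonal
operator blocks `F₊ : X₊ → X₋`, `F₋ : X₋ → X₊` (so `F² − Id` is compact and all
commutators `[F, π(a)]` are compact), and any idempotent `e ∈ A`, the compression
`π₋(e) F₊` from `π₊(e)(X₊)` to `π₋(e)(X₋)` is Fredholm. -/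
theorem isFredholm_eFe
    {A : Type*} [Ring A]
    {Xp Xm : Type*} [NormedAddCommGroup Xp] [NormedSpace ℂ Xp] [CompleteSpace Xp]
    [NormedAddCommGroup Xm] [NormedSpace ℂ Xm] [CompleteSpace Xm]
    (πp : A →+* (Xp →L[ℂ] Xp)) (πm : A →+* (Xm →L[ℂ] Xm))
    (Fp : Xp →L[ℂ] Xm) (Fm : Xm →L[ℂ] Xp)
    (h1 : IsCompactOperator ⇑(Fm.comp Fp - 1))
    (h2 : IsCompactOperator ⇑(Fp.comp Fm - 1))
    (hc1 : ∀ a : A, IsCompactOperator ⇑(Fp.comp (πp a) - (πm a).comp Fp))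
    (hc2 : ∀ a : A, IsCompactOperator ⇑(Fm.comp (πm a) - (πp a).comp Fm))
    (e : A) (he : IsIdempotentElem e) :
    IsFredholm (ContinuousLinearMap.codRestrict
      (((πm e).comp Fp).comp (LinearMap.range (πp e : Xp →ₗ[ℂ] Xp)).subtypeL)
      (LinearMap.range (πm e : Xm →ₗ[ℂ] Xm)) (fun x => ⟨Fp x, rfl⟩)) := by
  set P : Xp →L[ℂ] Xp := πp e with hPdef
  set Q : Xm →L[ℂ] Xm := πm e with hQdef
  have hPP : ∀ x, P (P x) = P x := by
    intro x
    have : P * P = P := by rw [hPdef, ← map_mul, he]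
    calc P (P x) = (P * P) x := rfl
      _ = P x := by rw [this]
  have hQQ : ∀ x, Q (Q x) = Q x := by
    intro x
    have : Q * Q = Q := by rw [hQdef, ← map_mul, he]
    calc Q (Q x) = (Q * Q) x := rfl
      _ = Q x := by rw [this]
  set E : Submodule ℂ Xp := LinearMap.range (P : Xp →ₗ[ℂ] Xp) with hEdef
  set F : Submodule ℂ Xm := LinearMap.range (Q : Xm →ₗ[ℂ] Xm) with hFdef
  have hPx : ∀ x ∈ E, P x = x := by rintro _ ⟨y, rfl⟩; exact hPP y
  have hQx : ∀ x ∈ F, Q x = x := by rintro _ ⟨y, rfl⟩; exact hQQ y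
  have hEker : E = LinearMap.ker ((1 - P : Xp →L[ℂ] Xp) : Xp →ₗ[ℂ] Xp) := by
    ext x
    constructor
    · intro hx
      show (1 - P) x = 0
      rw [ContinuousLinearMap.sub_apply, ContinuousLinearMap.one_apply, hPx x hx, sub_self]
    · intro hx
      have hx0 : x - P x = 0 := hx
      rw [sub_eq_zero] at hx0
      exact ⟨x, hx0.symm⟩
  have hFker : F = LinearMap.ker ((1 - Q : Xm →L[ℂ] Xm) : Xm →ₗ[ℂ] Xm) := by
    ext x
    constructor
    · intro hx
      show (1 - Q) x = 0
      rw [ContinuousLinearMap.sub_apply, ContinuousLinearMap.one_apply, hQx x hx, sub_self]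
    · intro hx
      have hx0 : x - Q x = 0 := hx
      rw [sub_eq_zero] at hx0
      exact ⟨x, hx0.symm⟩
  have hEclosed : IsClosed (E : Set Xp) := by
    rw [hEker]; exact ContinuousLinearMap.isClosed_ker _
  have hFclosed : IsClosed (F : Set Xm) := by
    rw [hFker]; exact ContinuousLinearMap.isClosed_ker _
  haveI : CompleteSpace E := hEclosed.completeSpace_coe
  haveI : CompleteSpace F := hFclosed.completeSpace_coe
  set T : E →L[ℂ] F := ContinuousLinearMap.codRestrict
      ((Q.comp Fp).comp E.subtypeL) F (fun x => ⟨Fp x, rfl⟩) with hTdef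
  set S : F →L[ℂ] E := ContinuousLinearMap.codRestrict
      ((P.comp Fm).comp F.subtypeL) E (fun y => ⟨Fm y, rfl⟩) with hSdef
  -- the compact error term on E
  set G : Xp →L[ℂ] Xp := P - ((P.comp Fm).comp (Q.comp Fp)) with hGdef
  have hGmem : ∀ x : E, G (x : Xp) ∈ E := by
    intro x
    rw [hGdef]
    exact Submodule.sub_mem _ ⟨(x : Xp), rfl⟩ ⟨Fm (Q (Fp (x : Xp))), rfl⟩
  have hGeq : G = -((P.comp (Fm.comp Q - P.comp Fm)).comp Fp + P.comp (Fm.comp Fp - 1)) := by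
    ext x
    simp only [hGdef, ContinuousLinearMap.coe_comp', Function.comp_apply,
      ContinuousLinearMap.sub_apply, ContinuousLinearMap.add_apply,
      ContinuousLinearMap.neg_apply, ContinuousLinearMap.one_apply, map_sub]
    rw [hPP (Fm (Fp x))]
    abel
  have hGc : IsCompactOperator ⇑G := by
    rw [hGeq]
    have hA1 : IsCompactOperator ⇑(Fm.comp Q - P.comp Fm) := hc2 e
    have hterm1 : IsCompactOperator
        ⇑((P.comp (Fm.comp Q - P.comp Fm)).comp Fp) :=
      (hA1.clm_comp P).comp_clm Fp
    have hterm2 : IsCompactOperator ⇑(P.comp (Fm.comp Fp - 1)) := h1.clm_comp P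
    exact (hterm1.add hterm2).neg
  -- the compact error term on F
  set G' : Xm →L[ℂ] Xm := Q - ((Q.comp Fp).comp (P.comp Fm)) with hG'def
  have hG'mem : ∀ y : F, G' (y : Xm) ∈ F := by
    intro y
    rw [hG'def]
    exact Submodule.sub_mem _ ⟨(y : Xm), rfl⟩ ⟨Fp (P (Fm (y : Xm))), rfl⟩
  have hG'eq : G' = -((Q.comp (Fp.comp P - Q.comp Fp)).comp Fm + Q.comp (Fp.comp Fm - 1)) := by
    ext x
    simp only [hG'def, ContinuousLinearMap.coe_comp', Function.comp_apply,
      ContinuousLinearMap.sub_apply, ContinuousLinearMap.add_apply,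
      ContinuousLinearMap.neg_apply, ContinuousLinearMap.one_apply, map_sub]
    rw [hQQ (Fp (Fm x))]
    abel
  have hG'c : IsCompactOperator ⇑G' := by
    rw [hG'eq]
    have hA2 : IsCompactOperator ⇑(Fp.comp P - Q.comp Fp) := hc1 e
    have hterm1 : IsCompactOperator
        ⇑((Q.comp (Fp.comp P - Q.comp Fp)).comp Fm) :=
      (hA2.clm_comp Q).comp_clm Fm
    have hterm2 : IsCompactOperator ⇑(Q.comp (Fp.comp Fm - 1)) := h2.clm_comp Q
    exact (hterm1.add hterm2).neg
  have hST : IsCompactOperator ⇑(1 - S.comp T) := by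
    have heq : ⇑(1 - S.comp T) = Set.codRestrict (⇑G ∘ Subtype.val) E hGmem := by
      funext x
      apply Subtype.ext
      show ((x : Xp) - (S (T x) : Xp)) = G (x : Xp)
      have h1' : (T x : Xm) = Q (Fp (x : Xp)) := rfl
      have h2' : (S (T x) : Xp) = P (Fm ((T x : Xm))) := rfl
      rw [h2', h1', hGdef]
      simp only [ContinuousLinearMap.sub_apply, ContinuousLinearMap.coe_comp',
        Function.comp_apply]
      rw [hPx (x : Xp) x.2]
    rw [heq]
    exact (hGc.comp_clm E.subtypeL).codRestrict
      (fun x => hGmem x) hEclosed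
  have hTS : IsCompactOperator ⇑(1 - T.comp S) := by
    have heq : ⇑(1 - T.comp S) = Set.codRestrict (⇑G' ∘ Subtype.val) F hG'mem := by
      funext y
      apply Subtype.ext
      show ((y : Xm) - (T (S y) : Xm)) = G' (y : Xm)
      have h1' : (S y : Xp) = P (Fm (y : Xm)) := rfl
      have h2' : (T (S y) : Xm) = Q (Fp ((S y : Xp))) := rfl
      rw [h2', h1', hG'def]
      simp only [ContinuousLinearMap.sub_apply, ContinuousLinearMap.coe_comp',
        Function.comp_apply]
      rw [hQx (y : Xm) y.2]
    rw [heq]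
    exact (hG'c.comp_clm F.subtypeL).codRestrict
      (fun y => hG'mem y) hFclosed
  exact atkinson T S hST hTS
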